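/- Let n ≥ 1 and let (x₁, y₁), …, (x_n, y_n) ∈ ℝ² satisfy x₁ > x₂ > … > x_n and y₁ < y₂ < … < y_n, and let r = (r_x, r_y) with r_x < x_n and r_y < y₁. Then the two-dimensional Lebesgue measure of the dominated region ⋃_{i=1}^{n} [r_x, x_i] × [r_y, y_i] equals Σ_{i=1}^{n} (x_i − r_x)(y_i − y_{i−1}), where y₀ := r_y. -/
import Mathlib


open MeasureTheory

private lemma vol_rect (a b c d : ℝ) :
    volume (Set.Icc a b ×ˢ Set.Icc c d) =
      ENNReal.ofReal (b - a) * ENNReal.ofReal (d - c) := by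
  rw [MeasureTheory.Measure.volume_eq_prod ℝ ℝ, MeasureTheory.Measure.prod_prod,
    Real.volume_Icc, Real.volume_Icc]

private lemma key (x y : ℕ → ℝ) (rx ry : ℝ) :
    ∀ n, 1 ≤ n →
    (∀ i j, i < j → j < n → x j < x i) →
    (∀ i j, i < j → j < n → y i < y j) →
    rx < x (n - 1) → ry < y 0 →
    volume (⋃ i ∈ Finset.range n,
        Set.Icc rx (x i) ×ˢ Set.Icc ry (y i)) =
      ENNReal.ofReal (∑ i ∈ Finset.range n,
        (x i - rx) * (y i - if i = 0 then ry else y (i - 1))) := by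
  intro n
  induction n with
  | zero => omega
  | succ n ih =>
    intro _ hx hy hrx hry
    rcases Nat.eq_zero_or_pos n with h0 | hpos
    · subst h0
      simp only [zero_add, Finset.range_one, Finset.mem_singleton, Set.iUnion_iUnion_eq_left,
        Finset.sum_singleton, if_pos rfl]
      rw [vol_rect, ← ENNReal.ofReal_mul (by simp at hrx; linarith)]
      simp
    · -- n ≥ 1
      have hxn : rx < x n := by simpa using hrx
      have hn1lt : n - 1 < n := Nat.sub_lt hpos one_pos
      have hxstep : x n < x (n - 1) := hx (n - 1) n hn1lt (Nat.lt_succ_self n)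
      have hx' : ∀ i j, i < j → j < n → x j < x i :=
        fun i j h1 h2 => hx i j h1 (h2.trans (Nat.lt_succ_self n))
      have hy' : ∀ i j, i < j → j < n → y i < y j :=
        fun i j h1 h2 => hy i j h1 (h2.trans (Nat.lt_succ_self n))
      have IH := ih hpos hx' hy' (lt_trans hxn hxstep) hry
      have hxi : ∀ i, i < n → x n < x i :=
        fun i hi => hx i n hi (Nat.lt_succ_self n)
      have hyle : ∀ i, i < n → y i ≤ y (n - 1) := by
        intro i hi
        rcases eq_or_lt_of_le (Nat.le_sub_one_of_lt hi) with h | h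
        · rw [h]
        · exact (hy' i (n - 1) h hn1lt).le
      have hylen : y (n - 1) ≤ y n := (hy (n - 1) n hn1lt (Nat.lt_succ_self n)).le
      have hry' : ry ≤ y (n - 1) := by
        rcases Nat.eq_zero_or_pos (n - 1) with h | h
        · rw [h]; exact hry.le
        · exact hry.le.trans (hy 0 (n - 1) h (hn1lt.trans (Nat.lt_succ_self n))).le
      set U := ⋃ i ∈ Finset.range n, Set.Icc rx (x i) ×ˢ Set.Icc ry (y i) with hU
      set R := Set.Icc rx (x n) ×ˢ Set.Icc ry (y n) with hR
      have hsplit : (⋃ i ∈ Finset.range (n + 1),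
          Set.Icc rx (x i) ×ˢ Set.Icc ry (y i)) = U ∪ R := by
        rw [Finset.range_add_one, Finset.set_biUnion_insert, Set.union_comm]
      have hinter : U ∩ R = Set.Icc rx (x n) ×ˢ Set.Icc ry (y (n - 1)) := by
        ext ⟨p, q⟩
        simp only [hU, hR, Set.mem_inter_iff, Set.mem_iUnion, Set.mem_prod,
          Set.mem_Icc, Finset.mem_range, exists_prop]
        constructor
        · rintro ⟨⟨i, hi, ⟨hp1, hp2⟩, hq1, hq2⟩, ⟨hp1', hp2'⟩, hq1', hq2'⟩
          exact ⟨⟨hp1, hp2'⟩, hq1, hq2.trans (hyle i hi)⟩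
        · rintro ⟨⟨hp1, hp2⟩, hq1, hq2⟩
          exact ⟨⟨n - 1, hn1lt, ⟨hp1, hp2.trans hxstep.le⟩, hq1, hq2⟩,
            ⟨hp1, hp2⟩, hq1, hq2.trans hylen⟩
      have hRmeas : MeasurableSet R :=
        (measurableSet_Icc).prod measurableSet_Icc
      have hIE := measure_union_add_inter (μ := volume) U hRmeas
      rw [hinter, IH, vol_rect, vol_rect] at hIE
      -- abbreviations
      set S : ℝ := ∑ i ∈ Finset.range n,
        (x i - rx) * (y i - if i = 0 then ry else y (i - 1)) with hS
      have hxnrx : (0:ℝ) ≤ x n - rx := by linarith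
      have hSnn : 0 ≤ S := by
        apply Finset.sum_nonneg
        intro i hi
        simp only [Finset.mem_range] at hi
        have h1 : x n < x i := hxi i hi
        have h2 : (0:ℝ) ≤ y i - if i = 0 then ry else y (i - 1) := by
          split
          · next h => subst h; linarith
          · next h =>
            have : y (i - 1) ≤ y i := by
              rcases Nat.eq_zero_or_pos i with h' | h'
              · exact absurd h' h
              · exact (hy (i - 1) i (Nat.sub_lt h' one_pos)
                  (hi.trans (Nat.lt_succ_self n))).le
            linarith
        have h3 : (0:ℝ) ≤ x i - rx := by linarith
        exact mul_nonneg h3 h2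
      have hInn : (0:ℝ) ≤ (x n - rx) * (y (n - 1) - ry) :=
        mul_nonneg hxnrx (by linarith)
      have hDnn : (0:ℝ) ≤ (x n - rx) * (y n - y (n - 1)) :=
        mul_nonneg hxnrx (by linarith)
      have hTnn : (0:ℝ) ≤ (x n - rx) * (y n - ry) :=
        mul_nonneg hxnrx (by linarith)
      rw [hsplit, Finset.sum_range_succ, ← hS]
      have hgoal_eq : ENNReal.ofReal (S + (x n - rx) * (y n - if n = 0 then ry else y (n - 1)))
          + ENNReal.ofReal ((x n - rx) * (y (n - 1) - ry))
          = ENNReal.ofReal S + ENNReal.ofReal ((x n - rx) * (y n - ry)) := by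
        rw [if_neg (by omega : ¬ n = 0)]
        rw [← ENNReal.ofReal_add (by linarith) hInn,
          ← ENNReal.ofReal_add hSnn hTnn]
        ring_nf
      have hfin : ENNReal.ofReal ((x n - rx) * (y (n - 1) - ry)) ≠ ⊤ :=
        ENNReal.ofReal_ne_top
      have := hIE
      rw [← ENNReal.ofReal_mul hxnrx, ← ENNReal.ofReal_mul hxnrx] at this
      rw [← hgoal_eq] at this
      exact WithTop.add_right_cancel hfin this

/-- Correctness of the step-stair hypervolume decomposition: for Pareto points
`(x i, y i)`, `i < n`, with strictly decreasing `x` and strictly increasing `y`,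
and a reference point `r = (r_x, r_y)` strictly worse than all points in both
coordinates, the Lebesgue measure of the dominated region
`⋃ i [r_x, x i] × [r_y, y i]` equals `Σ i (x i − r_x)(y i − y_{i−1})` with
`y₀ := r_y`. -/
theorem hypervolume_step_stair
    (n : ℕ) (hn : 1 ≤ n) (x y : ℕ → ℝ) (rx ry : ℝ)
    (hx : ∀ i j, i < j → j < n → x j < x i)
    (hy : ∀ i j, i < j → j < n → y i < y j)
    (hrx : rx < x (n - 1)) (hry : ry < y 0) :
    volume (⋃ i ∈ Finset.range n,
        Set.Icc rx (x i) ×ˢ Set.Icc ry (y i)) =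
      ENNReal.ofReal (∑ i ∈ Finset.range n,
        (x i - rx) * (y i - if i = 0 then ry else y (i - 1))) := by
  exact key x y rx ry n hn hx hy hrx hry
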